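/- Let R be a commutative ring in which every ideal is τ_q-finitely generated (a τ_q-Noetherian ring). Then R is τ_q-coherent: every τ_q-finitely generated ideal of R is τ_q-finitely presented. -/

import Mathlib

open Polynomial TensorProduct

universe u v

/-- An ideal is *semi-regular* if it contains a finitely generated dense subideal
(an ideal is *dense* if its annihilator is zero). -/
def Ideal.IsSemiregular {R : Type*} [CommRing R] (I : Ideal R) : Prop :=
  ∃ J : Ideal R, J ≤ I ∧ J.FG ∧ Submodule.annihilator J = ⊥

/-- A module is *Q-torsion* if every element is annihilated by some finitely
generated semi-regular ideal. -/
def IsQTorsion (R : Type*) (M : Type*) [CommRing R] [AddCommGroup M] [Module R M] : Prop :=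
  ∀ m : M, ∃ I : Ideal R, I.FG ∧ I.IsSemiregular ∧ ∀ a ∈ I, a • m = 0

/-- A module is *τ_q-finitely generated* if it has a finitely generated submodule
with Q-torsion quotient. -/
def IsTauQFG (R : Type u) (M : Type v) [CommRing R] [AddCommGroup M] [Module R M] : Prop :=
  ∃ N : Submodule R M, N.FG ∧ IsQTorsion R (M ⧸ N)

/-- A module is *τ_q-finitely presented* if it receives a linear map from a finitely
presented module with Q-torsion kernel and cokernel. -/
def IsTauQFP (R : Type u) (M : Type v) [CommRing R] [AddCommGroup M] [Module R M] : Prop :=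
  ∃ (N : Type v) (_ : AddCommGroup N) (_ : Module R N) (f : N →ₗ[R] M),
    Module.FinitePresentation R N ∧ IsQTorsion R (LinearMap.ker f) ∧
      IsQTorsion R (M ⧸ LinearMap.range f)

section Aux

variable {R : Type u} [CommRing R]

lemma aux_top_fg : (⊤ : Ideal R).FG :=
  ⟨{1}, by simpa using Ideal.span_singleton_one⟩

lemma aux_ann_top : Submodule.annihilator (⊤ : Ideal R) = ⊥ := by
  rw [eq_bot_iff]
  intro r hr
  have := Submodule.mem_annihilator.mp hr 1 Submodule.mem_top
  rw [smul_eq_mul, mul_one] at this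
  simpa using this

lemma aux_top_semireg : (⊤ : Ideal R).IsSemiregular :=
  ⟨⊤, le_rfl, aux_top_fg, aux_ann_top⟩

lemma Ideal.IsSemiregular.mul {I J : Ideal R}
    (hI : I.IsSemiregular) (hJ : J.IsSemiregular) : (I * J).IsSemiregular := by
  obtain ⟨D₁, hD₁I, hD₁fg, hD₁⟩ := hI
  obtain ⟨D₂, hD₂J, hD₂fg, hD₂⟩ := hJ
  refine ⟨D₁ * D₂, Ideal.mul_mono hD₁I hD₂J, Submodule.FG.mul hD₁fg hD₂fg, ?_⟩
  rw [eq_bot_iff]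
  intro r hr
  rw [Submodule.mem_annihilator] at hr
  rw [Submodule.mem_bot]
  have h1 : ∀ d₁ ∈ D₁, r * d₁ = 0 := by
    intro d₁ hd₁
    have h2 : r * d₁ ∈ Submodule.annihilator D₂ := by
      rw [Submodule.mem_annihilator]
      intro d₂ hd₂
      have h3 := hr _ (Ideal.mul_mem_mul hd₁ hd₂)
      rw [smul_eq_mul] at h3 ⊢
      rw [← mul_assoc] at h3
      exact h3
    rw [hD₂, Submodule.mem_bot] at h2; exact h2
  have h4 : r ∈ Submodule.annihilator D₁ :=
    Submodule.mem_annihilator.mpr fun d hd => by rw [smul_eq_mul]; exact h1 d hd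
  rw [hD₁, Submodule.mem_bot] at h4; exact h4

lemma aux_isQTorsion_of_subsingleton (M : Type*) [AddCommGroup M] [Module R M]
    [Subsingleton M] : IsQTorsion R M := by
  intro m
  exact ⟨⊤, aux_top_fg, aux_top_semireg, fun a _ => Subsingleton.elim _ _⟩

lemma aux_isTauQFG_of_subsingleton (M : Type*) [AddCommGroup M] [Module R M]
    [Subsingleton M] : IsTauQFG R M := by
  refine ⟨⊥, Submodule.fg_bot, ?_⟩
  haveI : Subsingleton (M ⧸ (⊥ : Submodule R M)) :=
    (Submodule.Quotient.mk_surjective _).subsingleton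
  exact aux_isQTorsion_of_subsingleton _

/-- Extension lemma: if the kernel and the range of a linear map `f : M → B` are
τ_q-finitely generated, then so is `M`. -/
lemma aux_isTauQFG_ext {M B : Type*} [AddCommGroup M] [Module R M]
    [AddCommGroup B] [Module R B] (f : M →ₗ[R] B)
    (hker : IsTauQFG R (LinearMap.ker f)) (hrange : IsTauQFG R (LinearMap.range f)) :
    IsTauQFG R M := by
  classical
  obtain ⟨A₀, hA₀fg, hA₀⟩ := hker
  obtain ⟨B₀, hB₀fg, hB₀⟩ := hrange
  obtain ⟨t, ht⟩ := hB₀fg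
  have hliftex : ∀ b : LinearMap.range f, ∃ m : M, f m = (b : B) := fun b => b.2
  choose lift hlift using hliftex
  set N : Submodule R M :=
    A₀.map (LinearMap.ker f).subtype ⊔ Submodule.span R (lift '' ↑t) with hNdef
  refine ⟨N, Submodule.FG.sup (hA₀fg.map _)
    (Submodule.fg_span ((t.finite_toSet).image _)), ?_⟩
  intro mbar
  obtain ⟨m, rfl⟩ := Submodule.Quotient.mk_surjective N mbar
  obtain ⟨J, hJfg, hJsemi, hJ⟩ :=
    hB₀ (Submodule.Quotient.mk ⟨f m, LinearMap.mem_range_self f m⟩)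
  obtain ⟨u, hu⟩ := hJfg
  have himg : Submodule.map f (Submodule.span R (lift '' ↑t))
      = Submodule.map (LinearMap.range f).subtype B₀ := by
    rw [← ht, Submodule.map_span, Submodule.map_span, ← Set.image_comp]
    congr 1
    exact Set.image_congr fun b _ => hlift b
  have key : ∀ a ∈ J, ∃ (z : M) (Ja : Ideal R), Ja.FG ∧ Ja.IsSemiregular ∧
      z ∈ N ∧ ∀ e ∈ Ja, e • (a • m - z) ∈ N := by
    intro a ha
    have h1 : a • (⟨f m, LinearMap.mem_range_self f m⟩ : LinearMap.range f) ∈ B₀ := by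
      have h2 := hJ a ha
      rwa [← Submodule.Quotient.mk_smul, Submodule.Quotient.mk_eq_zero] at h2
    have h3 : a • f m ∈ Submodule.map f (Submodule.span R (lift '' ↑t)) := by
      rw [himg]
      exact ⟨_, h1, rfl⟩
    obtain ⟨z, hz, hfz⟩ := h3
    have hzN : z ∈ N := le_sup_right (α := Submodule R M) hz
    have hker : a • m - z ∈ LinearMap.ker f := by
      rw [LinearMap.mem_ker, map_sub, map_smul, hfz, sub_self]
    obtain ⟨Ja, hJafg, hJasemi, hJa⟩ :=
      hA₀ (Submodule.Quotient.mk ⟨a • m - z, hker⟩)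
    refine ⟨z, Ja, hJafg, hJasemi, hzN, fun e he => ?_⟩
    have h5 := hJa e he
    rw [← Submodule.Quotient.mk_smul, Submodule.Quotient.mk_eq_zero] at h5
    have h6 : e • (a • m - z) ∈ A₀.map (LinearMap.ker f).subtype :=
      ⟨_, h5, rfl⟩
    exact le_sup_left (α := Submodule R M) h6
  choose z Ja hJafg hJasemi hzN hJa using key
  have hmem : ∀ a ∈ u, a ∈ J := fun a ha => hu ▸ Submodule.subset_span ha
  set K : Ideal R := ∏ a ∈ u.attach, Ja a.1 (hmem a.1 a.2) with hKdef
  have hK : K.FG ∧ K.IsSemiregular := by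
    refine Finset.prod_induction _ (fun I : Ideal R => I.FG ∧ I.IsSemiregular)
      (fun x y hx hy => ⟨Submodule.FG.mul hx.1 hy.1, hx.2.mul hy.2⟩) ?_
      (fun a _ => ⟨hJafg _ _, hJasemi _ _⟩)
    rw [Ideal.one_eq_top]
    exact ⟨aux_top_fg, aux_top_semireg⟩
  have hKle : ∀ a (ha : a ∈ u), K ≤ Ja a (hmem a ha) := by
    intro a ha
    rw [hKdef, ← Finset.mul_prod_erase _ _ (Finset.mem_attach u ⟨a, ha⟩)]
    exact Ideal.mul_le_left
  refine ⟨J * K, Submodule.FG.mul (⟨u, hu⟩ : J.FG) hK.1, hJsemi.mul hK.2, ?_⟩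
  have hle : J * K ≤ Submodule.annihilator
      (R ∙ (Submodule.Quotient.mk m : M ⧸ N)) := by
    rw [Ideal.mul_le]
    intro r hr s hs
    rw [Submodule.mem_annihilator_span_singleton]
    rw [← hu] at hr
    induction hr using Submodule.span_induction with
    | mem a ha =>
        rw [← Submodule.Quotient.mk_smul, Submodule.Quotient.mk_eq_zero]
        have h7 : (a * s) • m = s • (a • m - z a (hmem a ha)) + s • (z a (hmem a ha)) := by
          rw [smul_sub, sub_add_cancel, mul_comm, mul_smul]
        rw [h7]
        exact N.add_mem (hJa a (hmem a ha) s (hKle a ha hs)) (N.smul_mem s (hzN a (hmem a ha)))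
    | zero => simp
    | add x y hx hy ihx ihy => rw [add_mul, add_smul, ihx, ihy, add_zero]
    | smul r x hx ihx =>
        rw [smul_eq_mul, mul_assoc, mul_smul, ihx, smul_zero]
  intro c hc
  exact (Submodule.mem_annihilator_span_singleton _ _).mp (hle hc)

end Aux

section Pi

variable {R : Type u} [CommRing R]

lemma aux_subsingleton_of_injective {M B : Type*} [AddCommGroup M] [Module R M]
    [AddCommGroup B] [Module R B] (f : M →ₗ[R] B) (hf : Function.Injective f) :
    Subsingleton (LinearMap.ker f) := by
  constructor
  intro a b
  apply Subtype.ext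
  have ha : f a.1 = f 0 := by rw [a.2, map_zero]
  have hb : f b.1 = f 0 := by rw [b.2, map_zero]
  rw [hf ha, hf hb]

set_option maxHeartbeats 1000000 in
set_option synthInstance.maxHeartbeats 200000 in
lemma aux_isTauQFG_of_injective {M B : Type*} [AddCommGroup M] [Module R M]
    [AddCommGroup B] [Module R B] (f : M →ₗ[R] B) (hf : Function.Injective f)
    (h : IsTauQFG R (LinearMap.range f)) : IsTauQFG R M := by
  haveI := aux_subsingleton_of_injective f hf
  exact aux_isTauQFG_ext f (aux_isTauQFG_of_subsingleton _) h

lemma aux_pi_tauQFG (hNoeth : ∀ I : Ideal R, IsTauQFG R I) :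
    ∀ (n : ℕ) (M : Submodule R (Fin n → R)), IsTauQFG R M := by
  intro n
  induction n with
  | zero =>
      intro M
      haveI : Subsingleton M := ⟨fun a b => Subtype.ext (Subsingleton.elim _ _)⟩
      exact aux_isTauQFG_of_subsingleton M
  | succ n ih =>
      intro M
      let f : M →ₗ[R] R := (LinearMap.proj 0) ∘ₗ M.subtype
      let q : LinearMap.ker f →ₗ[R] (Fin n → R) :=
        (LinearMap.funLeft R R Fin.succ) ∘ₗ M.subtype ∘ₗ (LinearMap.ker f).subtype
      have hq : Function.Injective q := by
        intro a b hab
        apply Subtype.ext; apply Subtype.ext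
        funext i
        refine Fin.cases ?_ ?_ i
        · have ha : f a = 0 := a.2
          have hb : f b = 0 := b.2
          simp only [f, LinearMap.comp_apply, LinearMap.proj_apply] at ha hb
          exact ha.trans hb.symm
        · intro j
          have := congrFun hab j
          simpa [q, LinearMap.funLeft] using this
      have hker : IsTauQFG R (LinearMap.ker f) :=
        aux_isTauQFG_of_injective q hq (ih (LinearMap.range q))
      exact aux_isTauQFG_ext f hker (hNoeth (LinearMap.range f))

end Pi

/-- Every τ_q-Noetherian ring (every ideal is τ_q-finitely generated) is
τ_q-coherent (every τ_q-finitely generated ideal is τ_q-finitely presented). -/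
theorem statement16 (R : Type u) [CommRing R]
    (hNoeth : ∀ I : Ideal R, IsTauQFG R I) :
    ∀ I : Ideal R, IsTauQFG R I → IsTauQFP R I := by
  intro I hI
  obtain ⟨N, hNfg, hNtor⟩ := hI
  obtain ⟨s, hs⟩ := hNfg
  classical
  let v : ↥(s : Set I) → I := Subtype.val
  let g : (↥(s : Set I) → R) →ₗ[R] I := Fintype.linearCombination R v
  have hrg : LinearMap.range g = N := by
    rw [Fintype.range_linearCombination]
    rw [Subtype.range_coe]
    exact hs
  -- the kernel of g is τ_q-finitely generated
  have hkg : IsTauQFG R (LinearMap.ker g) := by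
    let e : (↥(s : Set I) → R) ≃ₗ[R] (Fin (Fintype.card ↥(s : Set I)) → R) :=
      LinearEquiv.funCongrLeft R R (Fintype.equivFin ↥(s : Set I)).symm
    let φ : LinearMap.ker g →ₗ[R] (Fin (Fintype.card ↥(s : Set I)) → R) :=
      e.toLinearMap ∘ₗ (LinearMap.ker g).subtype
    have hφ : Function.Injective φ :=
      e.injective.comp (Submodule.injective_subtype _)
    exact aux_isTauQFG_of_injective φ hφ (aux_pi_tauQFG hNoeth _ (LinearMap.range φ))
  obtain ⟨K₀', hK₀'fg, hK₀'tor⟩ := hkg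
  let K₀ : Submodule R (↥(s : Set I) → R) := K₀'.map (LinearMap.ker g).subtype
  have hK₀le : K₀ ≤ LinearMap.ker g := Submodule.map_subtype_le _ _
  let P := (↥(s : Set I) → R) ⧸ K₀
  have hPfp : Module.FinitePresentation R P := by
    apply Module.finitePresentation_of_free_of_surjective K₀.mkQ
      (Submodule.Quotient.mk_surjective K₀)
    rw [Submodule.ker_mkQ]
    exact hK₀'fg.map _
  let f : P →ₗ[R] I := K₀.liftQ g hK₀le
  refine ⟨P, inferInstance, inferInstance, f, hPfp, ?_, ?_⟩
  · -- kernel is Q-torsion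
    intro x
    have hx : x.1 ∈ (LinearMap.ker g).map K₀.mkQ := by
      rw [← Submodule.ker_liftQ]
      exact x.2
    obtain ⟨y, hy, hxy⟩ := hx
    obtain ⟨Jx, hJxfg, hJxsemi, hJx⟩ := hK₀'tor (Submodule.Quotient.mk ⟨y, hy⟩)
    refine ⟨Jx, hJxfg, hJxsemi, fun a ha => ?_⟩
    have h1 := hJx a ha
    rw [← Submodule.Quotient.mk_smul, Submodule.Quotient.mk_eq_zero] at h1
    have h2 : a • y ∈ K₀ := ⟨_, h1, rfl⟩
    apply Subtype.ext
    show a • x.1 = 0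
    rw [← hxy, ← map_smul, Submodule.mkQ_apply, Submodule.Quotient.mk_eq_zero]
    exact h2
  · -- cokernel is Q-torsion
    have hr : LinearMap.range f = N := by
      rw [Submodule.range_liftQ, hrg]
    rw [hr]
    exact hNtor
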